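/- Let E: L(H_n) → L(H_n) be a quantum channel and λ₁ the maximal eigenvalue of P_S(T ⊗ id_n)(C_E)P_S. Then the minimum gate fidelity satisfies F_E^min := min_{|φ⟩ unit} ⟨φ|E(|φ⟩⟨φ|)|φ⟩ = λ₁ − ‖λ₁ P_S − P_S(T ⊗ id_n)(C_E)P_S‖_{S(1)}. -/

import Mathlib

open Matrix BigOperators
open scoped ComplexOrder

noncomputable section

/-- |φ⟩⟨φ| as a matrix. -/
def ketbra {n : ℕ} (φ : Fin n → ℂ) : Matrix (Fin n) (Fin n) ℂ :=
  Matrix.vecMulVec φ (star φ)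

/-- Quadratic form ⟨v|M|v⟩. -/
def qf {m : Type*} [Fintype m] (M : Matrix m m ℂ) (v : m → ℂ) : ℂ :=
  star v ⬝ᵥ M *ᵥ v

/-- Tensor (Kronecker) product of vectors |ψ⟩⊗|χ⟩. -/
def kron {n : ℕ} (ψ χ : Fin n → ℂ) : Fin n × Fin n → ℂ :=
  fun p => ψ p.1 * χ p.2

/-- Unit vector predicate. -/
def unitv {n : ℕ} (φ : Fin n → ℂ) : Prop := star φ ⬝ᵥ φ = 1

/-- Linear maps on L(H_n), represented as linear maps on n×n matrices. -/
abbrev MatMap (n : ℕ) := Matrix (Fin n) (Fin n) ℂ →ₗ[ℂ] Matrix (Fin n) (Fin n) ℂ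

/-- Choi matrix C_Λ = Σ_{i,j} |i⟩⟨j| ⊗ Λ(|i⟩⟨j|). -/
def choi {n : ℕ} (Λ : MatMap n) : Matrix (Fin n × Fin n) (Fin n × Fin n) ℂ :=
  Matrix.of fun p q => Λ (Matrix.single p.1 q.1 1) p.2 q.2

/-- Partial transpose on the first factor, i.e. (T ⊗ id_n)(M). -/
def ptA {n : ℕ} (M : Matrix (Fin n × Fin n) (Fin n × Fin n) ℂ) :
    Matrix (Fin n × Fin n) (Fin n × Fin n) ℂ :=
  Matrix.of fun p q => M (q.1, p.2) (p.1, q.2)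

/-- The flip (swap) operator F on H_n ⊗ H_n. -/
def flipOp (n : ℕ) : Matrix (Fin n × Fin n) (Fin n × Fin n) ℂ :=
  Matrix.of fun p q => if p.1 = q.2 ∧ p.2 = q.1 then 1 else 0

/-- Projection onto the symmetric subspace, P_S = (1/2)(I + F). -/
def Psym (n : ℕ) : Matrix (Fin n × Fin n) (Fin n × Fin n) ℂ :=
  (1/2 : ℂ) • (1 + flipOp n)

/-- Gate fidelity F_Λ(|φ⟩) = ⟨φ|Λ(|φ⟩⟨φ|)|φ⟩. -/
def fid {n : ℕ} (Λ : MatMap n) (φ : Fin n → ℂ) : ℂ := qf (Λ (ketbra φ)) φ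

/-- Trace preserving. -/
def IsTP {n : ℕ} (Λ : MatMap n) : Prop := ∀ X, (Λ X).trace = X.trace

/-- Completely positive (via Choi's theorem: Choi matrix PSD). -/
def IsCP {n : ℕ} (Λ : MatMap n) : Prop := (choi Λ).PosSemidef

/-- Quantum channel: completely positive and trace preserving. -/
def IsChannel {n : ℕ} (Λ : MatMap n) : Prop := IsCP Λ ∧ IsTP Λ

/-- Λd is the Hilbert–Schmidt dual of Λ : Tr(Λ(X)Y) = Tr(X Λd(Y)). -/
def IsDual {n : ℕ} (Λ Λd : MatMap n) : Prop :=
  ∀ X Y, (Λ X * Y).trace = (X * Λd Y).trace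

/-- Standard basis vector. -/
def stdV (n : ℕ) (i : Fin n) : Fin n → ℂ := Pi.single i 1

/-- The symmetric subspace S = span{|i⟩|j⟩ + |j⟩|i⟩}. -/
def Ssub (n : ℕ) : Submodule ℂ (Fin n × Fin n → ℂ) :=
  Submodule.span ℂ {v | ∃ i j, v = kron (stdV n i) (stdV n j) + kron (stdV n j) (stdV n i)}

/-- The maximally entangled state |ψ₊⟩ = (1/√n) Σ_j |jj⟩. -/
def psiPlus (n : ℕ) : Fin n × Fin n → ℂ :=
  fun p => if p.1 = p.2 then ((Real.sqrt n : ℂ))⁻¹ else 0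


/-! ### Auxiliary lemmas -/

lemma flip_herm (n : ℕ) : (flipOp n).IsHermitian := by
  ext p q
  simp [flipOp, Matrix.conjTranspose_apply, and_comm, eq_comm, apply_ite]

lemma flip_mul_flip (n : ℕ) : flipOp n * flipOp n = 1 := by
  ext p q
  simp only [Matrix.mul_apply, flipOp, Matrix.of_apply]
  rw [Finset.sum_eq_single (p.2, p.1)]
  · simp [Matrix.one_apply, Prod.ext_iff, eq_comm, and_comm]
  · intro b _ hb
    rw [if_neg, zero_mul]
    rintro ⟨h1, h2⟩
    exact hb (by simp [Prod.ext_iff, h1.symm, h2.symm])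
  · simp

lemma Psym_herm (n : ℕ) : (Psym n).IsHermitian := by
  have h := flip_herm n
  unfold Matrix.IsHermitian at *
  simp [Psym, Matrix.conjTranspose_smul, Matrix.conjTranspose_add, h]

lemma Psym_mul_Psym (n : ℕ) : Psym n * Psym n = Psym n := by
  simp only [Psym, Matrix.smul_mul, Matrix.mul_smul, smul_smul, add_mul, mul_add,
    one_mul, mul_one, flip_mul_flip]
  module

lemma flip_mulVec {n : ℕ} (v : Fin n × Fin n → ℂ) :
    flipOp n *ᵥ v = fun p => v (p.2, p.1) := by
  funext p
  simp only [Matrix.mulVec, flipOp, Matrix.of_apply, dotProduct]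
  rw [Finset.sum_eq_single (p.2, p.1)]
  · simp
  · intro b _ hb
    rw [if_neg, zero_mul]
    rintro ⟨h1, h2⟩
    exact hb (by simp [Prod.ext_iff, h1.symm, h2.symm])
  · simp

lemma Psym_mulVec_kron {n : ℕ} (ψ χ : Fin n → ℂ) :
    Psym n *ᵥ kron ψ χ = (1/2 : ℂ) • (kron ψ χ + kron χ ψ) := by
  funext p
  simp only [Psym, Matrix.smul_mulVec, Matrix.add_mulVec, flip_mulVec, Matrix.one_mulVec,
    Pi.smul_apply, Pi.add_apply, kron, smul_eq_mul]
  ring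

lemma qf_smul {m : Type*} [Fintype m] (c : ℂ) (M : Matrix m m ℂ) (v : m → ℂ) :
    qf (c • M) v = c * qf M v := by
  simp [qf, Matrix.smul_mulVec, dotProduct_smul]

lemma qf_sub {m : Type*} [Fintype m] (M N : Matrix m m ℂ) (v : m → ℂ) :
    qf (M - N) v = qf M v - qf N v := by
  simp [qf, Matrix.sub_mulVec, dotProduct_sub]

lemma qf_sandwich {m : Type*} [Fintype m] {P : Matrix m m ℂ} (hP : P.IsHermitian)
    (A : Matrix m m ℂ) (v : m → ℂ) : qf (P * A * P) v = qf A (P *ᵥ v) := by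
  have h : star v ᵥ* P = star (P *ᵥ v) := by rw [Matrix.star_mulVec, hP.eq]
  simp only [qf, ← Matrix.mulVec_mulVec]
  rw [Matrix.dotProduct_mulVec (star v) P, h]

lemma qf_re_nonneg {m : Type*} [Fintype m] {M : Matrix m m ℂ} (hM : M.PosSemidef)
    (v : m → ℂ) : 0 ≤ (qf M v).re := hM.re_dotProduct_nonneg v

lemma dot_star_self_re {m : Type*} [Fintype m] (v : m → ℂ) :
    star v ⬝ᵥ v = (((star v ⬝ᵥ v).re : ℝ) : ℂ) := by
  have h : star v ⬝ᵥ v = ((∑ i, Complex.normSq (v i) : ℝ) : ℂ) := by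
    simp [dotProduct, Complex.normSq_eq_conj_mul_self]
  rw [h]
  norm_num

lemma smul_one_sub_posSemidef {m : Type*} [Fintype m] [DecidableEq m]
    {M : Matrix m m ℂ} (hM : M.IsHermitian) (lam1 : ℝ)
    (h : ∀ (x : ℝ) (v : m → ℂ), v ≠ 0 → M *ᵥ v = (x : ℂ) • v → x ≤ lam1) :
    ((lam1 : ℂ) • (1 : Matrix m m ℂ) - M).PosSemidef := by
  have hev : ∀ i, hM.eigenvalues i ≤ lam1 := by
    intro i
    refine h (hM.eigenvalues i) ((WithLp.equiv 2 _) (hM.eigenvectorBasis i)) ?_ ?_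
    · exact fun hz => hM.eigenvectorBasis.orthonormal.ne_zero i ((WithLp.equiv 2 _).injective (hz.trans rfl))
    · rw [WithLp.equiv_apply, hM.mulVec_eigenvectorBasis]
      funext j
      simp [Complex.real_smul]
  set U : Matrix m m ℂ := (hM.eigenvectorUnitary : Matrix m m ℂ) with hU
  have hUU : U * star U = 1 := Matrix.mem_unitaryGroup_iff.mp hM.eigenvectorUnitary.2
  have key : (lam1 : ℂ) • (1 : Matrix m m ℂ) - M
      = U * ((lam1 : ℂ) • (1 : Matrix m m ℂ) - diagonal (RCLike.ofReal ∘ hM.eigenvalues)) * star U := by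
    conv_lhs => rw [hM.spectral_theorem, Unitary.conjStarAlgAut_apply, ← hU]
    rw [Matrix.mul_sub, Matrix.sub_mul, Matrix.mul_smul, Matrix.mul_one, Matrix.smul_mul, hUU]
  rw [key]
  have hdiag : ((lam1 : ℂ) • (1 : Matrix m m ℂ) - diagonal (RCLike.ofReal ∘ hM.eigenvalues))
      = diagonal (fun i => ((lam1 - hM.eigenvalues i : ℝ) : ℂ)) := by
    ext i j
    rcases eq_or_ne i j with rfl | hij
    · simp [Matrix.sub_apply, Matrix.smul_apply, Matrix.one_apply_eq]
    · simp [Matrix.sub_apply, Matrix.smul_apply, Matrix.one_apply_ne hij,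
        Matrix.diagonal_apply_ne _ hij]
  rw [hdiag]
  have hd : (diagonal (fun i => ((lam1 - hM.eigenvalues i : ℝ) : ℂ))).PosSemidef := by
    rw [Matrix.posSemidef_diagonal_iff]
    intro i
    rw [Complex.zero_le_real]
    linarith [hev i]
  have hfin := hd.mul_mul_conjTranspose_same U
  simpa [Matrix.star_eq_conjTranspose] using hfin

lemma qf_eq_sum {m : Type*} [Fintype m] (M : Matrix m m ℂ) (v : m → ℂ) :
    qf M v = ∑ z : m × m, star (v z.1) * M z.1 z.2 * v z.2 := by
  rw [Fintype.sum_prod_type]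
  simp only [qf, dotProduct, Matrix.mulVec, Finset.mul_sum, Pi.star_apply]
  exact Finset.sum_congr rfl fun p _ => Finset.sum_congr rfl fun q _ => by ring

lemma ketbra_eq_sum {n : ℕ} (φ : Fin n → ℂ) :
    ketbra φ = ∑ c, ∑ a, (φ c * star (φ a)) • Matrix.single c a (1 : ℂ) := by
  ext i j
  simp [ketbra, Matrix.vecMulVec_apply, Matrix.sum_apply, Matrix.single,
    ite_and, Finset.sum_ite_eq, Finset.sum_ite_eq', Pi.star_apply]

lemma apply_ketbra {n : ℕ} (E : MatMap n) (φ : Fin n → ℂ) (b d : Fin n) :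
    E (ketbra φ) b d = ∑ c, ∑ a, (φ c * star (φ a)) * E (Matrix.single c a 1) b d := by
  rw [ketbra_eq_sum]
  simp only [map_sum, LinearMap.map_smul, Matrix.sum_apply, Matrix.smul_apply, smul_eq_mul]

lemma sum_four {a : Type*} [Fintype a] (f : (a × a) × (a × a) → ℂ) :
    ∑ z : (a × a) × (a × a), f z = ∑ b, ∑ d, ∑ c, ∑ e, f ((b, d), (c, e)) := by
  rw [Fintype.sum_prod_type, Fintype.sum_prod_type]
  exact Finset.sum_congr rfl fun b _ => Finset.sum_congr rfl fun d _ =>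
    Fintype.sum_prod_type _

lemma fid_eq_sum {n : ℕ} (E : MatMap n) (φ : Fin n → ℂ) :
    fid E φ = ∑ y : (Fin n × Fin n) × (Fin n × Fin n),
      star (φ y.1.1) * ((φ y.2.1 * star (φ y.2.2)) * E (Matrix.single y.2.1 y.2.2 1) y.1.1 y.1.2) * φ y.1.2 := by
  rw [fid, qf_eq_sum]
  rw [Fintype.sum_prod_type]
  conv_rhs => rw [sum_four]
  refine Finset.sum_congr rfl fun b _ => ?_
  refine Finset.sum_congr rfl fun d _ => ?_
  rw [apply_ketbra]
  simp only [Finset.sum_mul, Finset.mul_sum]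

lemma fid_eq {n : ℕ} (E : MatMap n) (φ : Fin n → ℂ) :
    fid E φ = qf (ptA (choi E)) (kron φ φ) := by
  rw [fid_eq_sum, qf_eq_sum]
  refine Fintype.sum_equiv
    ⟨fun y => ((y.2.2, y.1.1), (y.2.1, y.1.2)),
     fun z => ((z.1.2, z.2.2), (z.2.1, z.1.1)),
     fun y => rfl, fun z => rfl⟩ _ _ fun y => ?_
  simp only [Equiv.coe_fn_mk, kron, ptA, choi, Matrix.of_apply, Pi.star_apply, star_mul']
  ring

lemma fid_eq_choi {n : ℕ} (E : MatMap n) (φ : Fin n → ℂ) :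
    fid E φ = qf (choi E) (kron (star φ) φ) := by
  rw [fid_eq_sum, qf_eq_sum]
  refine Fintype.sum_equiv
    ⟨fun y => ((y.2.1, y.1.1), (y.2.2, y.1.2)),
     fun z => ((z.1.2, z.2.2), (z.1.1, z.2.1)),
     fun y => rfl, fun z => rfl⟩ _ _ fun y => ?_
  simp only [Equiv.coe_fn_mk, kron, choi, Matrix.of_apply, Pi.star_apply, star_mul', star_star]
  ring

def NN {m : Type*} [Fintype m] (x : m → ℂ) : ℝ :=
  ‖(WithLp.equiv 2 (m → ℂ)).symm x‖

lemma NN_nonneg {m : Type*} [Fintype m] (x : m → ℂ) : 0 ≤ NN x := norm_nonneg _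

lemma NN_sq {m : Type*} [Fintype m] (x : m → ℂ) : NN x ^ 2 = (star x ⬝ᵥ x).re := by
  have h : NN x = Real.sqrt (∑ i, ‖x i‖ ^ 2) := EuclideanSpace.norm_eq _
  rw [h, Real.sq_sqrt (Finset.sum_nonneg fun i _ => sq_nonneg _)]
  have h2 : (star x ⬝ᵥ x) = ((∑ i, ‖x i‖ ^ 2 : ℝ) : ℂ) := by
    push_cast
    simp only [dotProduct, Pi.star_apply]
    refine Finset.sum_congr rfl fun i _ => ?_
    rw [Complex.star_def, Complex.conj_mul']
  rw [h2, Complex.ofReal_re]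

lemma NN_sub_le {m : Type*} [Fintype m] (x y : m → ℂ) : NN (x - y) ≤ NN x + NN y := by
  unfold NN
  rw [WithLp.equiv_symm_apply, WithLp.toLp_sub]
  exact norm_sub_le _ _

lemma NN_smul {m : Type*} [Fintype m] (c : ℂ) (x : m → ℂ) : NN (c • x) = ‖c‖ * NN x := by
  unfold NN
  rw [WithLp.equiv_symm_apply, WithLp.toLp_smul, norm_smul]

lemma NN_zero {m : Type*} [Fintype m] : NN (0 : m → ℂ) = 0 := by
  unfold NN
  simp

lemma dot_kron {n : ℕ} (ψ χ : Fin n → ℂ) :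
    star (kron ψ χ) ⬝ᵥ kron ψ χ = (star ψ ⬝ᵥ ψ) * (star χ ⬝ᵥ χ) := by
  simp only [dotProduct, Pi.star_apply, kron]
  rw [Finset.sum_mul_sum, Fintype.sum_prod_type]
  refine Finset.sum_congr rfl fun i _ => Finset.sum_congr rfl fun j _ => ?_
  simp only [star_mul']
  ring

open scoped MatrixOrder in
lemma key_bound {n : ℕ} {X : Matrix (Fin n × Fin n) (Fin n × Fin n) ℂ}
    (hX : X.PosSemidef) (hXP : Psym n * X * Psym n = X) {S : ℝ} (hS0 : 0 ≤ S)
    (hS : ∀ φ : Fin n → ℂ, unitv φ → (qf X (kron φ φ)).re ≤ S)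
    {ψ χ : Fin n → ℂ} (hψ : unitv ψ) (hχ : unitv χ) :
    (qf X (kron ψ χ)).re ≤ S := by
  obtain ⟨B, hB⟩ := CStarAlgebra.nonneg_iff_eq_star_mul_self.mp hX.nonneg
  rw [Matrix.star_eq_conjTranspose] at hB
  subst hB
  have hq : ∀ v : Fin n × Fin n → ℂ, (qf (Bᴴ * B) v).re = NN (B *ᵥ v) ^ 2 := by
    intro v
    rw [NN_sq]
    congr 1
    rw [qf, ← Matrix.mulVec_mulVec, Matrix.dotProduct_mulVec, ← Matrix.star_mulVec]
  have sqrtS : Real.sqrt S ^ 2 = S := Real.sq_sqrt hS0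
  have stepA : ∀ z : Fin n → ℂ, NN (B *ᵥ kron z z) ≤ (star z ⬝ᵥ z).re * Real.sqrt S := by
    intro z
    set t : ℝ := (star z ⬝ᵥ z).re with ht
    have ht0 : 0 ≤ t := by rw [ht, ← NN_sq]; positivity
    rcases eq_or_lt_of_le ht0 with h0 | hpos
    · have hz : z = 0 := by
        apply (WithLp.equiv 2 (Fin n → ℂ)).symm.injective
        have h1 : NN z ^ 2 = 0 := by rw [NN_sq, ← ht, ← h0]
        have h2 : NN z = 0 := by nlinarith [NN_nonneg z]
        simpa [NN] using norm_eq_zero.mp h2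
      have hk0 : kron z z = 0 := by funext p; simp [kron, hz]
      rw [hk0, Matrix.mulVec_zero, NN_zero, ← h0, zero_mul]
    · set c : ℂ := (((Real.sqrt t)⁻¹ : ℝ) : ℂ) with hc
      have hsq : Real.sqrt t * Real.sqrt t = t := Real.mul_self_sqrt ht0
      have hsqpos : 0 < Real.sqrt t := Real.sqrt_pos.mpr hpos
      have hcc : (t : ℂ) * (c * c) = 1 := by
        rw [hc]
        have hr : (t * ((Real.sqrt t)⁻¹ * (Real.sqrt t)⁻¹) : ℝ) = 1 := by
          rw [← mul_inv, hsq, mul_inv_cancel₀ (ne_of_gt hpos)]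
        exact_mod_cast congrArg Complex.ofReal hr
      have hunit : unitv (c • z) := by
        show star (c • z) ⬝ᵥ (c • z) = 1
        rw [star_smul, smul_dotProduct, dotProduct_smul, dot_star_self_re z, ← ht]
        have hstar : star c = c := by rw [hc, Complex.star_def, Complex.conj_ofReal]
        rw [hstar]
        simp only [smul_eq_mul]
        rw [← hcc]
        ring
      have hk : kron z z = (t : ℂ) • kron (c • z) (c • z) := by
        have h1 : kron (c • z) (c • z) = (c * c) • kron z z := by
          funext p
          simp only [kron, Pi.smul_apply, smul_eq_mul]
          ring
        rw [h1, smul_smul, hcc, one_smul]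
      have hb : NN (B *ᵥ kron (c • z) (c • z)) ^ 2 ≤ S := by
        rw [← hq]
        exact hS _ hunit
      have hb2 : NN (B *ᵥ kron (c • z) (c • z)) ≤ Real.sqrt S := by
        nlinarith [NN_nonneg (B *ᵥ kron (c • z) (c • z)), Real.sqrt_nonneg S]
      calc NN (B *ᵥ kron z z) = ‖(t : ℂ)‖ * NN (B *ᵥ kron (c • z) (c • z)) := by
            rw [hk, Matrix.mulVec_smul, NN_smul]
        _ = t * NN (B *ᵥ kron (c • z) (c • z)) := by
            rw [Complex.norm_real, Real.norm_eq_abs, abs_of_pos hpos]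
        _ ≤ t * Real.sqrt S := by
            exact mul_le_mul_of_nonneg_left hb2 ht0
  have hψ' : star ψ ⬝ᵥ ψ = 1 := hψ
  have hχ' : star χ ⬝ᵥ χ = 1 := hχ
  have h4 : star (ψ + χ) ⬝ᵥ (ψ + χ) + star (ψ - χ) ⬝ᵥ (ψ - χ) = (4 : ℂ) := by
    simp only [star_add, star_sub, add_dotProduct, sub_dotProduct,
      dotProduct_add, dotProduct_sub, hψ', hχ']
    ring
  have hsum : (star (ψ + χ) ⬝ᵥ (ψ + χ)).re + (star (ψ - χ) ⬝ᵥ (ψ - χ)).re = 4 := by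
    have := congrArg Complex.re h4
    simpa [Complex.add_re] using this
  have hP : Psym n *ᵥ kron ψ χ
      = (1/4 : ℂ) • (kron (ψ + χ) (ψ + χ) - kron (ψ - χ) (ψ - χ)) := by
    rw [Psym_mulVec_kron]
    funext p
    simp only [Pi.smul_apply, Pi.add_apply, Pi.sub_apply, kron, smul_eq_mul]
    ring
  have main : NN (B *ᵥ (Psym n *ᵥ kron ψ χ)) ≤ Real.sqrt S := by
    rw [hP, Matrix.mulVec_smul]
    rw [NN_smul]
    have hnorm : ‖(1/4 : ℂ)‖ = 1/4 := by norm_num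
    rw [hnorm, Matrix.mulVec_sub]
    have h1 := NN_sub_le (B *ᵥ kron (ψ + χ) (ψ + χ)) (B *ᵥ kron (ψ - χ) (ψ - χ))
    have h2 := stepA (ψ + χ)
    have h3 := stepA (ψ - χ)
    have h5 : 0 ≤ Real.sqrt S := Real.sqrt_nonneg S
    nlinarith [hsum]
  have hfinal : (qf (Bᴴ * B) (kron ψ χ)).re = NN (B *ᵥ (Psym n *ᵥ kron ψ χ)) ^ 2 := by
    conv_lhs => rw [← hXP]
    rw [qf_sandwich (Psym_herm n), hq]
  rw [hfinal]
  nlinarith [NN_nonneg (B *ᵥ (Psym n *ᵥ kron ψ χ)), Real.sqrt_nonneg S, main]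

lemma unitv_stdV {n : ℕ} (i : Fin n) : unitv (stdV n i) := by
  show star (Pi.single i 1) ⬝ᵥ (Pi.single i 1 : Fin n → ℂ) = 1
  simp [dotProduct, Pi.single_apply, Pi.star_apply, apply_ite]


theorem stmt19 {n : ℕ} (E : MatMap n) (hE : IsChannel E) (lam1 : ℝ)
    (hlam : IsGreatest {x : ℝ | ∃ v : Fin n × Fin n → ℂ, v ≠ 0 ∧
        (Psym n * ptA (choi E) * Psym n) *ᵥ v = (x : ℂ) • v} lam1) :
    sInf {r : ℝ | ∃ φ : Fin n → ℂ, unitv φ ∧ r = (fid E φ).re} =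
      lam1 - sSup {r : ℝ | ∃ ψ χ : Fin n → ℂ, unitv ψ ∧ unitv χ ∧
        r = (qf ((lam1 : ℂ) • Psym n - Psym n * ptA (choi E) * Psym n) (kron ψ χ)).re} := by
  classical
  rcases Nat.eq_zero_or_pos n with hn | hn
  · exfalso
    subst hn
    obtain ⟨v, hv, -⟩ := hlam.1
    exact hv (funext fun p => Fin.elim0 p.1)
  · have hC : (choi E).PosSemidef := hE.1
    have hA_herm : (ptA (choi E)).IsHermitian := by
      ext p q
      simp only [Matrix.conjTranspose_apply]
      show star ((ptA (choi E)) q p) = (ptA (choi E)) p q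
      show star ((choi E) (p.1, q.2) (q.1, p.2)) = (choi E) (q.1, p.2) (p.1, q.2)
      conv_rhs => rw [← hC.1]
      rw [Matrix.conjTranspose_apply]
    have hMherm : (Psym n * ptA (choi E) * Psym n).IsHermitian := by
      show _ᴴ = _
      simp [Matrix.conjTranspose_mul, (Psym_herm n).eq, hA_herm.eq, Matrix.mul_assoc]
    have hY : (((lam1 : ℂ)) • 1 - Psym n * ptA (choi E) * Psym n).PosSemidef :=
      smul_one_sub_posSemidef hMherm lam1 (fun x v hv hx => hlam.2 ⟨v, hv, hx⟩)
    have hPMP : Psym n * (Psym n * ptA (choi E) * Psym n) * Psym n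
        = Psym n * ptA (choi E) * Psym n := by
      have hassoc : Psym n * (Psym n * ptA (choi E) * Psym n) * Psym n
          = (Psym n * Psym n) * ptA (choi E) * (Psym n * Psym n) := by
        simp only [Matrix.mul_assoc]
      rw [hassoc, Psym_mul_Psym]
    have hXeq : (lam1 : ℂ) • Psym n - Psym n * ptA (choi E) * Psym n
        = (Psym n)ᴴ * (((lam1 : ℂ)) • 1 - Psym n * ptA (choi E) * Psym n) * Psym n := by
      rw [(Psym_herm n).eq]
      rw [Matrix.mul_sub, Matrix.sub_mul, Matrix.mul_smul, Matrix.mul_one, Matrix.smul_mul,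
        Psym_mul_Psym, hPMP]
    have hXpsd : ((lam1 : ℂ) • Psym n - Psym n * ptA (choi E) * Psym n).PosSemidef := by
      rw [hXeq]
      exact hY.conjTranspose_mul_mul_same (Psym n)
    have hXP : Psym n * ((lam1 : ℂ) • Psym n - Psym n * ptA (choi E) * Psym n) * Psym n
        = (lam1 : ℂ) • Psym n - Psym n * ptA (choi E) * Psym n := by
      rw [Matrix.mul_sub, Matrix.sub_mul, Matrix.mul_smul, Matrix.smul_mul,
        Psym_mul_Psym, hPMP, Psym_mul_Psym]
    have hPk : ∀ φ : Fin n → ℂ, Psym n *ᵥ kron φ φ = kron φ φ := by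
      intro φ
      rw [Psym_mulVec_kron]
      funext p
      simp only [Pi.smul_apply, Pi.add_apply, kron, smul_eq_mul]
      ring
    have hid : ∀ φ : Fin n → ℂ, unitv φ →
        (qf ((lam1 : ℂ) • Psym n - Psym n * ptA (choi E) * Psym n) (kron φ φ)).re
          = lam1 - (fid E φ).re := by
      intro φ hφ
      have hφ' : star φ ⬝ᵥ φ = 1 := hφ
      have hqP : qf (Psym n) (kron φ φ) = 1 := by
        rw [qf, hPk φ, dot_kron, hφ', mul_one]
      have hM : qf (Psym n * ptA (choi E) * Psym n) (kron φ φ) = fid E φ := by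
        rw [qf_sandwich (Psym_herm n), hPk φ, ← fid_eq]
      rw [qf_sub, qf_smul, hqP, mul_one, hM, Complex.sub_re, Complex.ofReal_re]
    have hfid0 : ∀ φ : Fin n → ℂ, 0 ≤ (fid E φ).re := fun φ => by
      rw [fid_eq_choi]
      exact qf_re_nonneg hC _
    set L := {r : ℝ | ∃ φ : Fin n → ℂ, unitv φ ∧ r = (fid E φ).re} with hLdef
    set R := {r : ℝ | ∃ ψ χ : Fin n → ℂ, unitv ψ ∧ unitv χ ∧
        r = (qf ((lam1 : ℂ) • Psym n - Psym n * ptA (choi E) * Psym n) (kron ψ χ)).re}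
      with hRdef
    have hφ0 : unitv (stdV n ⟨0, hn⟩) := unitv_stdV _
    have hLne : L.Nonempty := ⟨(fid E (stdV n ⟨0, hn⟩)).re, stdV n ⟨0, hn⟩, hφ0, rfl⟩
    have hbddL : BddBelow L := by
      refine ⟨0, ?_⟩
      rintro r ⟨φ, hφ, rfl⟩
      exact hfid0 φ
    have hS0 : 0 ≤ lam1 - sInf L := by
      have h1 : 0 ≤ (qf ((lam1 : ℂ) • Psym n - Psym n * ptA (choi E) * Psym n)
          (kron (stdV n ⟨0, hn⟩) (stdV n ⟨0, hn⟩))).re := qf_re_nonneg hXpsd _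
      have h2 := hid _ hφ0
      have h3 : sInf L ≤ (fid E (stdV n ⟨0, hn⟩)).re :=
        csInf_le hbddL ⟨stdV n ⟨0, hn⟩, hφ0, rfl⟩
      linarith
    have hSb : ∀ φ : Fin n → ℂ, unitv φ →
        (qf ((lam1 : ℂ) • Psym n - Psym n * ptA (choi E) * Psym n) (kron φ φ)).re
          ≤ lam1 - sInf L := by
      intro φ hφ
      rw [hid φ hφ]
      have h3 : sInf L ≤ (fid E φ).re := csInf_le hbddL ⟨φ, hφ, rfl⟩
      linarith
    have hub : ∀ r ∈ R, r ≤ lam1 - sInf L := by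
      rintro r ⟨ψ, χ, hψ, hχ, rfl⟩
      exact key_bound hXpsd hXP hS0 hSb hψ hχ
    have hRne : R.Nonempty :=
      ⟨_, stdV n ⟨0, hn⟩, stdV n ⟨0, hn⟩, hφ0, hφ0, rfl⟩
    have hbddR : BddAbove R := ⟨lam1 - sInf L, hub⟩
    have h5 : sSup R ≤ lam1 - sInf L := csSup_le hRne hub
    have h7 : lam1 - sSup R ≤ sInf L := by
      refine le_csInf hLne ?_
      rintro r ⟨φ, hφ, rfl⟩
      have hmem : lam1 - (fid E φ).re ∈ R := ⟨φ, φ, hφ, hφ, (hid φ hφ).symm⟩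
      linarith [le_csSup hbddR hmem]
    linarith
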